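/- Let U ⊆ ℂⁿ = E₁ ⊕ E₂ be a k-dimensional subspace and π : ℂⁿ → ℂⁿ/U the quotient map. Under the perfect pairing Hom(U, ℂⁿ/U) × Hom(ℂⁿ/U, U) → ℂ given by (φ, ψ) ↦ tr(ψ ∘ φ), the annihilator of the subspace T = {φ : φ(U ∩ E₁) ⊆ π(E₁) and φ(U ∩ E₂) ⊆ π(E₂)} equals N = {ψ : ψ(π(E₁)) ⊆ U ∩ E₂ and ψ(π(E₂)) ⊆ U ∩ E₁}. (This computes the conormal space at U to the GL(p)×GL(q)-orbit through U.) -/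

import Mathlib

open Module

lemma trace_rankOne {K V : Type*} [Field K] [AddCommGroup V] [Module K V]
    [FiniteDimensional K V] (f : V →ₗ[K] K) (m : V) :
    LinearMap.trace K V (f.smulRight m) = f m := by
  have h : f.smulRight m = dualTensorHom K V V (f ⊗ₜ m) := by
    ext x; simp [dualTensorHom_apply]
  rw [h, LinearMap.trace_eq_contract_apply, contractLeft_apply]

lemma trace_swap_zero {K V : Type*} [Field K] [AddCommGroup V] [Module K V]
    [FiniteDimensional K V] (A B : Submodule K V) (hAB : A ⊓ B = ⊥)
    (f : V →ₗ[K] V) (hA : ∀ a ∈ A, f a ∈ B) (hB : ∀ b ∈ B, f b ∈ A)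
    (hr : ∀ x, f x ∈ A ⊔ B) : LinearMap.trace K V f = 0 := by
  obtain ⟨D₀, hD₀⟩ := Submodule.exists_isCompl (A ⊔ B)
  have hcA : IsCompl A (B ⊔ D₀) := by
    constructor
    · rw [Submodule.disjoint_def]
      intro x hxA hx
      obtain ⟨b, hb, d, hd, rfl⟩ := Submodule.mem_sup.mp hx
      have hdAB : d ∈ (A ⊔ B) ⊓ D₀ := by
        refine ⟨?_, hd⟩
        rw [show d = (b + d) - b by abel]
        exact sub_mem (Submodule.mem_sup_left hxA) (Submodule.mem_sup_right hb)
      rw [hD₀.inf_eq_bot] at hdAB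
      simp only [Submodule.mem_bot] at hdAB
      subst hdAB
      have : b ∈ A ⊓ B := ⟨by simpa using hxA, hb⟩
      rw [hAB] at this
      simpa using this
    · rw [codisjoint_iff, ← sup_assoc, ← codisjoint_iff]
      exact hD₀.codisjoint
  have hcB : IsCompl B (A ⊔ D₀) := by
    constructor
    · rw [Submodule.disjoint_def]
      intro x hxB hx
      obtain ⟨a, ha, d, hd, rfl⟩ := Submodule.mem_sup.mp hx
      have hdAB : d ∈ (A ⊔ B) ⊓ D₀ := by
        refine ⟨?_, hd⟩
        rw [show d = (a + d) - a by abel]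
        exact sub_mem (Submodule.mem_sup_right hxB) (Submodule.mem_sup_left ha)
      rw [hD₀.inf_eq_bot] at hdAB
      simp only [Submodule.mem_bot] at hdAB
      subst hdAB
      have : a ∈ A ⊓ B := ⟨ha, by simpa using hxB⟩
      rw [hAB] at this
      simpa using this
    · rw [codisjoint_iff, show B ⊔ (A ⊔ D₀) = (A ⊔ B) ⊔ D₀ by rw [← sup_assoc, sup_comm B A]]
      exact hD₀.codisjoint.eq_top
  set pA : V →ₗ[K] V := A.subtype ∘ₗ A.projectionOnto _ hcA with hpA
  set pB : V →ₗ[K] V := B.subtype ∘ₗ B.projectionOnto _ hcB with hpB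
  have pA_left : ∀ a ∈ A, pA a = a := fun a ha => by
    simp [hpA, Submodule.projectionOnto_apply_of_mem_left hcA ha, Submodule.projection_apply_of_mem_left hcA ha]
  have pA_right : ∀ b ∈ B, pA b = 0 := fun b hb => by
    simp [hpA, Submodule.projectionOnto_apply_of_mem_right hcA (Submodule.mem_sup_left hb)]
  have pB_left : ∀ b ∈ B, pB b = b := fun b hb => by
    simp [hpB, Submodule.projectionOnto_apply_of_mem_left hcB hb, Submodule.projection_apply_of_mem_left hcB hb]
  have pB_right : ∀ a ∈ A, pB a = 0 := fun a ha => by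
    simp [hpB, Submodule.projectionOnto_apply_of_mem_right hcB (Submodule.mem_sup_left ha)]
  have hsplit : f = pA ∘ₗ f + pB ∘ₗ f := by
    ext x
    obtain ⟨a, ha, b, hb, hab⟩ := Submodule.mem_sup.mp (hr x)
    simp only [LinearMap.add_apply, LinearMap.comp_apply, ← hab]
    rw [map_add, map_add, pA_left a ha, pA_right b hb, pB_right a ha, pB_left b hb]
    abel
  have hnA : LinearMap.trace K V (pA ∘ₗ f) = 0 := by
    have : IsNilpotent (pA ∘ₗ f) := by
      refine ⟨2, ?_⟩
      ext x
      have h1 : pA (f x) ∈ A := by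
        simp [hpA]
      simp only [pow_succ, pow_zero, one_mul, Module.End.mul_apply, LinearMap.comp_apply, LinearMap.zero_apply]
      rw [pA_right _ (hA _ h1)]
    have := LinearMap.isNilpotent_trace_of_isNilpotent this
    exact this.eq_zero
  have hnB : LinearMap.trace K V (pB ∘ₗ f) = 0 := by
    have : IsNilpotent (pB ∘ₗ f) := by
      refine ⟨2, ?_⟩
      ext x
      have h1 : pB (f x) ∈ B := by
        simp [hpB]
      simp only [pow_succ, pow_zero, one_mul, Module.End.mul_apply, LinearMap.comp_apply, LinearMap.zero_apply]
      rw [pB_right _ (hB _ h1)]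
    have := LinearMap.isNilpotent_trace_of_isNilpotent this
    exact this.eq_zero
  rw [hsplit, map_add, hnA, hnB, add_zero]


/-- For a k-dimensional subspace `U ⊆ ℂⁿ = E₁ ⊕ E₂` with quotient map
`π : ℂⁿ → ℂⁿ/U`, under the trace pairing `(φ, ψ) ↦ tr(ψ ∘ φ)` the annihilator of
`T = {φ : U →ₗ ℂⁿ/U | φ(U ∩ E₁) ⊆ π(E₁), φ(U ∩ E₂) ⊆ π(E₂)}` equals
`N = {ψ : ℂⁿ/U →ₗ U | ψ(π(E₁)) ⊆ U ∩ E₂, ψ(π(E₂)) ⊆ U ∩ E₁}`. -/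
theorem conormal_space_orbit_GLp_GLq (p q k n : ℕ) (hp : 0 < p) (hq : 0 < q) (hk : 0 < k)
    (hpq : p + q = n) (hkn : k ≤ n)
    (E₁ E₂ : Submodule ℂ (Fin n → ℂ)) (hcompl : IsCompl E₁ E₂)
    (hE₁ : finrank ℂ E₁ = p) (hE₂ : finrank ℂ E₂ = q)
    (U : Submodule ℂ (Fin n → ℂ)) (hU : finrank ℂ U = k) :
    {ψ : ((Fin n → ℂ) ⧸ U) →ₗ[ℂ] U | ∀ φ : U →ₗ[ℂ] ((Fin n → ℂ) ⧸ U),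
        ((∀ u : U, (u : Fin n → ℂ) ∈ E₁ → φ u ∈ Submodule.map U.mkQ E₁) ∧
         (∀ u : U, (u : Fin n → ℂ) ∈ E₂ → φ u ∈ Submodule.map U.mkQ E₂)) →
        LinearMap.trace ℂ U (ψ ∘ₗ φ) = 0} =
    {ψ : ((Fin n → ℂ) ⧸ U) →ₗ[ℂ] U |
        (∀ x ∈ E₁, (ψ (U.mkQ x) : Fin n → ℂ) ∈ E₂) ∧
        (∀ x ∈ E₂, (ψ (U.mkQ x) : Fin n → ℂ) ∈ E₁)} := by
  set A' : Submodule ℂ U := E₁.comap U.subtype with hA'def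
  set B' : Submodule ℂ U := E₂.comap U.subtype with hB'def
  ext ψ
  simp only [Set.mem_setOf_eq]
  constructor
  · intro h
    by_contra hN
    rw [not_and_or] at hN
    rcases hN with hN | hN
    · push_neg at hN
      obtain ⟨x, hx, hu⟩ := hN
      set u : U := ψ (U.mkQ x) with hudef
      have hu' : u ∉ B' := hu
      have hmk : B'.mkQ u ≠ 0 := by
        simpa [Submodule.Quotient.mk_eq_zero] using hu'
      obtain ⟨g, hg⟩ : ∃ g : Module.Dual ℂ (U ⧸ B'), g (B'.mkQ u) ≠ 0 := by
        by_contra hc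
        push_neg at hc
        exact hmk ((Module.forall_dual_apply_eq_zero_iff ℂ _).mp hc)
      set φ : U →ₗ[ℂ] ((Fin n → ℂ) ⧸ U) := (g ∘ₗ B'.mkQ).smulRight (U.mkQ x) with hφdef
      have hT1 : ∀ u' : U, (u' : Fin n → ℂ) ∈ E₁ → φ u' ∈ Submodule.map U.mkQ E₁ := by
        intro u' hu'
        exact Submodule.smul_mem _ _ ⟨x, hx, rfl⟩
      have hT2 : ∀ u' : U, (u' : Fin n → ℂ) ∈ E₂ → φ u' ∈ Submodule.map U.mkQ E₂ := by
        intro u' hu'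
        have : B'.mkQ u' = 0 := (Submodule.Quotient.mk_eq_zero B').mpr hu'
        simp [hφdef, this]
      have htr := h φ ⟨hT1, hT2⟩
      have hcomp : ψ ∘ₗ φ = (g ∘ₗ B'.mkQ).smulRight u := by
        ext v
        simp [hφdef, hudef]
      rw [hcomp, trace_rankOne] at htr
      exact hg htr
    · push_neg at hN
      obtain ⟨x, hx, hu⟩ := hN
      set u : U := ψ (U.mkQ x) with hudef
      have hu' : u ∉ A' := hu
      have hmk : A'.mkQ u ≠ 0 := by
        simpa [Submodule.Quotient.mk_eq_zero] using hu'
      obtain ⟨g, hg⟩ : ∃ g : Module.Dual ℂ (U ⧸ A'), g (A'.mkQ u) ≠ 0 := by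
        by_contra hc
        push_neg at hc
        exact hmk ((Module.forall_dual_apply_eq_zero_iff ℂ _).mp hc)
      set φ : U →ₗ[ℂ] ((Fin n → ℂ) ⧸ U) := (g ∘ₗ A'.mkQ).smulRight (U.mkQ x) with hφdef
      have hT1 : ∀ u' : U, (u' : Fin n → ℂ) ∈ E₁ → φ u' ∈ Submodule.map U.mkQ E₁ := by
        intro u' hu'
        have : A'.mkQ u' = 0 := (Submodule.Quotient.mk_eq_zero A').mpr hu'
        simp [hφdef, this]
      have hT2 : ∀ u' : U, (u' : Fin n → ℂ) ∈ E₂ → φ u' ∈ Submodule.map U.mkQ E₂ := by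
        intro u' hu'
        exact Submodule.smul_mem _ _ ⟨x, hx, rfl⟩
      have htr := h φ ⟨hT1, hT2⟩
      have hcomp : ψ ∘ₗ φ = (g ∘ₗ A'.mkQ).smulRight u := by
        ext v
        simp [hφdef, hudef]
      rw [hcomp, trace_rankOne] at htr
      exact hg htr
  · rintro ⟨h1, h2⟩ φ ⟨hφ1, hφ2⟩
    apply trace_swap_zero A' B'
    · rw [Submodule.eq_bot_iff]
      rintro ⟨v, hv⟩ ⟨hv1, hv2⟩
      have : v ∈ E₁ ⊓ E₂ := ⟨hv1, hv2⟩
      rw [hcompl.inf_eq_bot] at this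
      simpa [Subtype.ext_iff] using this
    · intro a ha
      obtain ⟨y, hy, hy2⟩ := hφ1 a ha
      show ((ψ (φ a)) : Fin n → ℂ) ∈ E₂
      rw [← hy2]
      exact h1 y hy
    · intro b hb
      obtain ⟨y, hy, hy2⟩ := hφ2 b hb
      show ((ψ (φ b)) : Fin n → ℂ) ∈ E₁
      rw [← hy2]
      exact h2 y hy
    · intro v
      have htop : Submodule.map U.mkQ E₁ ⊔ Submodule.map U.mkQ E₂ = ⊤ := by
        rw [← Submodule.map_sup, hcompl.sup_eq_top, Submodule.map_top, Submodule.range_mkQ]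
      have : φ v ∈ Submodule.map U.mkQ E₁ ⊔ Submodule.map U.mkQ E₂ := by
        rw [htop]; trivial
      obtain ⟨y, hy, z, hz, hyz⟩ := Submodule.mem_sup.mp this
      obtain ⟨e₁, he₁, rfl⟩ := hy
      obtain ⟨e₂, he₂, rfl⟩ := hz
      refine Submodule.mem_sup.mpr ⟨ψ (U.mkQ e₂), h2 e₂ he₂, ψ (U.mkQ e₁), h1 e₁ he₁, ?_⟩
      show _ = ψ (φ v)
      rw [← hyz, map_add, add_comm]
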